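/- Define l : ℝ² → ℝ⁴ by l(u,v) = (1/cosh u)·(cos v, sin v, sinh u, 0), set E(u) = 1/cosh²u, r(u,v) = (v + π/2)·tanh u, and n = (0,0,0,1). Then: (i) ⟨l,l⟩ = 1, ⟨l_u,l_u⟩ = ⟨l_v,l_v⟩ = E, ⟨l_u,l_v⟩ = 0, and Δl + 2E·l = 0; (ii) Δr + 2E·r = 0; (iii) for all (u,v,w) ∈ ℝ³, r·l + (r_u/E)·l_u + (r_v/E)·l_v + w·n = ( −sinh u · sin v, sinh u · cos v, v + π/2, w ). Hence the minimal foliated semi-symmetric hypersurface generated by the totally geodesic sphere S² ⊂ S³ and this solution r is the first type helicoid X(u¹,t,w) = u¹(cos t·e₁ + sin t·e₂) + t·e₃ + w·e₄. -/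

import Mathlib

open Real
open scoped InnerProductSpace

noncomputable section

/-- ℝ⁴ with the standard Euclidean inner product. -/
abbrev E4 := EuclideanSpace ℝ (Fin 4)

/-- Partial derivative with respect to the first parameter. -/
def pu {F : Type*} [NormedAddCommGroup F] [NormedSpace ℝ F]
    (f : ℝ × ℝ → F) (p : ℝ × ℝ) : F := fderiv ℝ f p (1, 0)

/-- Partial derivative with respect to the second parameter. -/
def pv {F : Type*} [NormedAddCommGroup F] [NormedSpace ℝ F]
    (f : ℝ × ℝ → F) (p : ℝ × ℝ) : F := fderiv ℝ f p (0, 1)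

/-- The totally geodesic sphere `S² = S³ ∩ ℝ³` in isothermal parameters:
`l(u,v) = (1/cosh u)·(cos v, sin v, sinh u, 0)`. -/
def lsph (q : ℝ × ℝ) : E4 :=
  (1 / Real.cosh q.1) • (WithLp.equiv 2 (Fin 4 → ℝ)).symm
    ![Real.cos q.2, Real.sin q.2, Real.sinh q.1, 0]

/-- The conformal factor `E(u) = 1/cosh²u`. -/
def Esph (q : ℝ × ℝ) : ℝ := 1 / (Real.cosh q.1) ^ 2

/-- The scalar function `r(u,v) = (v + π/2)·tanh u`. -/
def rsph (q : ℝ × ℝ) : ℝ := (q.2 + Real.pi / 2) * Real.tanh q.1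

/-- The unit normal `n = e₄`. -/
def nsph : E4 := EuclideanSpace.single (3 : Fin 4) (1 : ℝ)

def V (a b c d : ℝ) : E4 := (WithLp.equiv 2 (Fin 4 → ℝ)).symm ![a, b, c, d]

lemma V_congr {a b c d a' b' c' d' : ℝ} (h1 : a = a') (h2 : b = b')
    (h3 : c = c') (h4 : d = d') : V a b c d = V a' b' c' d' := by
  rw [h1, h2, h3, h4]

lemma inner_V (a b c d a' b' c' d' : ℝ) :
    ⟪V a b c d, V a' b' c' d'⟫_ℝ = a*a' + b*b' + c*c' + d*d' := by
  simp [V, PiLp.inner_apply, Fin.sum_univ_four, WithLp.equiv_symm_apply, PiLp.toLp_apply]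
  ring

lemma smul_V (t a b c d : ℝ) : t • V a b c d = V (t*a) (t*b) (t*c) (t*d) := by
  ext i
  fin_cases i <;> simp [V, WithLp.equiv_symm_apply, PiLp.toLp_apply]

lemma add_V (a b c d a' b' c' d' : ℝ) :
    V a b c d + V a' b' c' d' = V (a+a') (b+b') (c+c') (d+d') := by
  ext i
  fin_cases i <;> simp [V, WithLp.equiv_symm_apply, PiLp.toLp_apply]

lemma V_zero : V 0 0 0 0 = 0 := by
  ext i
  fin_cases i <;> simp [V, WithLp.equiv_symm_apply, PiLp.toLp_apply]

lemma nsph_eq : nsph = V 0 0 0 1 := by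
  ext i
  fin_cases i <;> simp [nsph, V, WithLp.equiv_symm_apply, PiLp.toLp_apply, EuclideanSpace.single]

/-! ### partial derivatives of separable scalar functions -/

lemma sep_hasFDerivAt {g h : ℝ → ℝ} {g' h' : ℝ} (q : ℝ × ℝ)
    (hg : HasDerivAt g g' q.1) (hh : HasDerivAt h h' q.2) :
    HasFDerivAt (fun p : ℝ × ℝ => g p.1 * h p.2)
      ((g q.1) • (h' • ContinuousLinearMap.snd ℝ ℝ ℝ)
        + (h q.2) • (g' • ContinuousLinearMap.fst ℝ ℝ ℝ)) q :=
  (hg.comp_hasFDerivAt q hasFDerivAt_fst).mul (hh.comp_hasFDerivAt q hasFDerivAt_snd)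

lemma sep_diff {g h : ℝ → ℝ} {g' h' : ℝ} (q : ℝ × ℝ)
    (hg : HasDerivAt g g' q.1) (hh : HasDerivAt h h' q.2) :
    DifferentiableAt ℝ (fun p : ℝ × ℝ => g p.1 * h p.2) q :=
  (sep_hasFDerivAt q hg hh).differentiableAt

lemma pu_sep {g h : ℝ → ℝ} {g' h' : ℝ} (q : ℝ × ℝ)
    (hg : HasDerivAt g g' q.1) (hh : HasDerivAt h h' q.2) :
    pu (fun p : ℝ × ℝ => g p.1 * h p.2) q = g' * h q.2 := by
  rw [pu, (sep_hasFDerivAt q hg hh).fderiv]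
  simp [mul_comm]

lemma pv_sep {g h : ℝ → ℝ} {g' h' : ℝ} (q : ℝ × ℝ)
    (hg : HasDerivAt g g' q.1) (hh : HasDerivAt h h' q.2) :
    pv (fun p : ℝ × ℝ => g p.1 * h p.2) q = g q.1 * h' := by
  rw [pv, (sep_hasFDerivAt q hg hh).fderiv]
  simp

lemma fst_hasFDerivAt {g : ℝ → ℝ} {g' : ℝ} (q : ℝ × ℝ) (hg : HasDerivAt g g' q.1) :
    HasFDerivAt (fun p : ℝ × ℝ => g p.1) (g' • ContinuousLinearMap.fst ℝ ℝ ℝ) q :=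
  hg.comp_hasFDerivAt q hasFDerivAt_fst

lemma fst_diff {g : ℝ → ℝ} {g' : ℝ} (q : ℝ × ℝ) (hg : HasDerivAt g g' q.1) :
    DifferentiableAt ℝ (fun p : ℝ × ℝ => g p.1) q :=
  (fst_hasFDerivAt q hg).differentiableAt

lemma pu_fst {g : ℝ → ℝ} {g' : ℝ} (q : ℝ × ℝ) (hg : HasDerivAt g g' q.1) :
    pu (fun p : ℝ × ℝ => g p.1) q = g' := by
  rw [pu, (fst_hasFDerivAt q hg).fderiv]; simp

lemma pv_fst {g : ℝ → ℝ} {g' : ℝ} (q : ℝ × ℝ) (hg : HasDerivAt g g' q.1) :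
    pv (fun p : ℝ × ℝ => g p.1) q = 0 := by
  rw [pv, (fst_hasFDerivAt q hg).fderiv]; simp

lemma pu_const (c : ℝ) (q : ℝ × ℝ) : pu (fun _ : ℝ × ℝ => c) q = 0 := by
  simp [pu]

lemma pv_const (c : ℝ) (q : ℝ × ℝ) : pv (fun _ : ℝ × ℝ => c) q = 0 := by
  simp [pv]

/-! ### componentwise pu/pv for V-valued functions -/

lemma pu_V {f0 f1 f2 f3 : ℝ × ℝ → ℝ} (q : ℝ × ℝ)
    (h0 : DifferentiableAt ℝ f0 q) (h1 : DifferentiableAt ℝ f1 q)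
    (h2 : DifferentiableAt ℝ f2 q) (h3 : DifferentiableAt ℝ f3 q) :
    pu (fun p => V (f0 p) (f1 p) (f2 p) (f3 p)) q
      = V (pu f0 q) (pu f1 q) (pu f2 q) (pu f3 q) := by
  have hpi : HasFDerivAt (fun (p : ℝ × ℝ) (i : Fin 4) => ![f0, f1, f2, f3] i p)
      (ContinuousLinearMap.pi ![fderiv ℝ f0 q, fderiv ℝ f1 q, fderiv ℝ f2 q, fderiv ℝ f3 q]) q := by
    rw [hasFDerivAt_pi]
    intro i
    fin_cases i
    · simpa using h0.hasFDerivAt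
    · simpa using h1.hasFDerivAt
    · simpa using h2.hasFDerivAt
    · simpa using h3.hasFDerivAt
  have hcle : HasFDerivAt (fun p => V (f0 p) (f1 p) (f2 p) (f3 p))
      (((PiLp.continuousLinearEquiv 2 ℝ (fun _ : Fin 4 => ℝ)).symm :
          (Fin 4 → ℝ) →L[ℝ] E4).comp
        (ContinuousLinearMap.pi ![fderiv ℝ f0 q, fderiv ℝ f1 q, fderiv ℝ f2 q, fderiv ℝ f3 q])) q := by
    have := ((PiLp.continuousLinearEquiv 2 ℝ (fun _ : Fin 4 => ℝ)).symm.hasFDerivAt).comp q hpi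
    refine HasFDerivAt.congr_of_eventuallyEq this (Filter.Eventually.of_forall fun p => ?_)
    ext i
    fin_cases i <;> rfl
  rw [pu, hcle.fderiv]
  ext i
  fin_cases i <;> rfl

lemma pv_V {f0 f1 f2 f3 : ℝ × ℝ → ℝ} (q : ℝ × ℝ)
    (h0 : DifferentiableAt ℝ f0 q) (h1 : DifferentiableAt ℝ f1 q)
    (h2 : DifferentiableAt ℝ f2 q) (h3 : DifferentiableAt ℝ f3 q) :
    pv (fun p => V (f0 p) (f1 p) (f2 p) (f3 p)) q
      = V (pv f0 q) (pv f1 q) (pv f2 q) (pv f3 q) := by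
  have hpi : HasFDerivAt (fun (p : ℝ × ℝ) (i : Fin 4) => ![f0, f1, f2, f3] i p)
      (ContinuousLinearMap.pi ![fderiv ℝ f0 q, fderiv ℝ f1 q, fderiv ℝ f2 q, fderiv ℝ f3 q]) q := by
    rw [hasFDerivAt_pi]
    intro i
    fin_cases i
    · simpa using h0.hasFDerivAt
    · simpa using h1.hasFDerivAt
    · simpa using h2.hasFDerivAt
    · simpa using h3.hasFDerivAt
  have hcle : HasFDerivAt (fun p => V (f0 p) (f1 p) (f2 p) (f3 p))
      (((PiLp.continuousLinearEquiv 2 ℝ (fun _ : Fin 4 => ℝ)).symm :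
          (Fin 4 → ℝ) →L[ℝ] E4).comp
        (ContinuousLinearMap.pi ![fderiv ℝ f0 q, fderiv ℝ f1 q, fderiv ℝ f2 q, fderiv ℝ f3 q])) q := by
    have := ((PiLp.continuousLinearEquiv 2 ℝ (fun _ : Fin 4 => ℝ)).symm.hasFDerivAt).comp q hpi
    refine HasFDerivAt.congr_of_eventuallyEq this (Filter.Eventually.of_forall fun p => ?_)
    ext i
    fin_cases i <;> rfl
  rw [pv, hcle.fderiv]
  ext i
  fin_cases i <;> rfl

/-! ### one-variable derivative facts -/

lemma hS (u : ℝ) : HasDerivAt (fun u => (Real.cosh u)⁻¹)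
    (-Real.sinh u / Real.cosh u ^ 2) u := by
  simpa using (Real.hasDerivAt_cosh u).fun_inv (Real.cosh_pos u).ne'

lemma hnS (u : ℝ) : HasDerivAt (fun u => -(Real.cosh u)⁻¹)
    (Real.sinh u / Real.cosh u ^ 2) u := by
  have := (hS u).neg
  refine this.congr_deriv (Eq.symm ?_)
  ring

lemma hT (u : ℝ) : HasDerivAt (fun u => Real.sinh u * (Real.cosh u)⁻¹)
    ((Real.cosh u ^ 2)⁻¹) u := by
  have h := (Real.hasDerivAt_sinh u).mul (hS u)
  refine h.congr_deriv (Eq.symm ?_)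
  have hc := (Real.cosh_pos u).ne'
  field_simp
  nlinarith [Real.cosh_sq u]

lemma hP (u : ℝ) : HasDerivAt (fun u => -Real.sinh u / Real.cosh u ^ 2)
    ((Real.sinh u ^ 2 - 1) / Real.cosh u ^ 3) u := by
  have h := ((Real.hasDerivAt_sinh u).neg).div ((Real.hasDerivAt_cosh u).pow 2)
    (pow_ne_zero 2 (Real.cosh_pos u).ne')
  refine h.congr_deriv (Eq.symm ?_)
  have hc := (Real.cosh_pos u).ne'
  simp only [Pi.pow_apply, Pi.neg_apply, Nat.cast_ofNat]
  field_simp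
  linear_combination (Real.cosh u) * Real.cosh_sq u

lemma hQ (u : ℝ) : HasDerivAt (fun u => (Real.cosh u ^ 2)⁻¹)
    (-2 * Real.sinh u / Real.cosh u ^ 3) u := by
  have h := ((Real.hasDerivAt_cosh u).pow 2).inv (pow_ne_zero 2 (Real.cosh_pos u).ne')
  refine h.congr_deriv (Eq.symm ?_)
  have hc := (Real.cosh_pos u).ne'
  simp only [Pi.pow_apply, Pi.neg_apply, Nat.cast_ofNat]
  field_simp
  ring

lemma hid (v : ℝ) : HasDerivAt (fun v : ℝ => v + Real.pi / 2) 1 v := by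
  simpa using (hasDerivAt_id v).add_const (Real.pi / 2)

/-! ### canonical forms of lsph, rsph and their derivatives -/

lemma l_fun : lsph = fun p : ℝ × ℝ =>
    V ((Real.cosh p.1)⁻¹ * Real.cos p.2) ((Real.cosh p.1)⁻¹ * Real.sin p.2)
      (Real.sinh p.1 * (Real.cosh p.1)⁻¹) 0 := by
  funext p
  ext i
  fin_cases i <;> simp [lsph, V, WithLp.equiv_symm_apply, PiLp.toLp_apply] <;> ring

lemma pul_fun : pu lsph = fun p : ℝ × ℝ =>
    V ((-Real.sinh p.1 / Real.cosh p.1 ^ 2) * Real.cos p.2)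
      ((-Real.sinh p.1 / Real.cosh p.1 ^ 2) * Real.sin p.2)
      ((Real.cosh p.1 ^ 2)⁻¹) 0 := by
  funext p
  rw [l_fun, pu_V p (sep_diff p (hS p.1) (Real.hasDerivAt_cos p.2))
    (sep_diff p (hS p.1) (Real.hasDerivAt_sin p.2))
    (fst_diff p (hT p.1)) (differentiableAt_const 0),
    pu_sep p (hS p.1) (Real.hasDerivAt_cos p.2),
    pu_sep p (hS p.1) (Real.hasDerivAt_sin p.2),
    pu_fst p (hT p.1), pu_const]

lemma pvl_fun : pv lsph = fun p : ℝ × ℝ =>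
    V (-(Real.cosh p.1)⁻¹ * Real.sin p.2) ((Real.cosh p.1)⁻¹ * Real.cos p.2) 0 0 := by
  funext p
  rw [l_fun, pv_V p (sep_diff p (hS p.1) (Real.hasDerivAt_cos p.2))
    (sep_diff p (hS p.1) (Real.hasDerivAt_sin p.2))
    (fst_diff p (hT p.1)) (differentiableAt_const 0),
    pv_sep p (hS p.1) (Real.hasDerivAt_cos p.2),
    pv_sep p (hS p.1) (Real.hasDerivAt_sin p.2),
    pv_fst p (hT p.1), pv_const]
  exact V_congr (by ring) rfl rfl rfl

lemma puul (q : ℝ × ℝ) : pu (pu lsph) q =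
    V (((Real.sinh q.1 ^ 2 - 1) / Real.cosh q.1 ^ 3) * Real.cos q.2)
      (((Real.sinh q.1 ^ 2 - 1) / Real.cosh q.1 ^ 3) * Real.sin q.2)
      (-2 * Real.sinh q.1 / Real.cosh q.1 ^ 3) 0 := by
  rw [pul_fun, pu_V q (sep_diff q (hP q.1) (Real.hasDerivAt_cos q.2))
    (sep_diff q (hP q.1) (Real.hasDerivAt_sin q.2))
    (fst_diff q (hQ q.1)) (differentiableAt_const 0),
    pu_sep q (hP q.1) (Real.hasDerivAt_cos q.2),
    pu_sep q (hP q.1) (Real.hasDerivAt_sin q.2),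
    pu_fst q (hQ q.1), pu_const]

lemma pvvl (q : ℝ × ℝ) : pv (pv lsph) q =
    V (-(Real.cosh q.1)⁻¹ * Real.cos q.2) (-(Real.cosh q.1)⁻¹ * Real.sin q.2) 0 0 := by
  rw [pvl_fun, pv_V q (sep_diff q (hnS q.1) (Real.hasDerivAt_sin q.2))
    (sep_diff q (hS q.1) (Real.hasDerivAt_cos q.2))
    (differentiableAt_const 0) (differentiableAt_const 0),
    pv_sep q (hnS q.1) (Real.hasDerivAt_sin q.2),
    pv_sep q (hS q.1) (Real.hasDerivAt_cos q.2),
    pv_const]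
  exact V_congr rfl (by ring) rfl rfl

lemma r_fun : rsph = fun p : ℝ × ℝ =>
    (Real.sinh p.1 * (Real.cosh p.1)⁻¹) * (p.2 + Real.pi / 2) := by
  funext p
  simp [rsph, Real.tanh_eq_sinh_div_cosh]
  ring

lemma pur_fun : pu rsph = fun p : ℝ × ℝ =>
    (Real.cosh p.1 ^ 2)⁻¹ * (p.2 + Real.pi / 2) := by
  funext p
  rw [r_fun, pu_sep p (hT p.1) (hid p.2)]

lemma pvr_fun : pv rsph = fun p : ℝ × ℝ => Real.sinh p.1 * (Real.cosh p.1)⁻¹ := by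
  funext p
  rw [r_fun, pv_sep p (hT p.1) (hid p.2), mul_one]

lemma puur (q : ℝ × ℝ) : pu (pu rsph) q =
    (-2 * Real.sinh q.1 / Real.cosh q.1 ^ 3) * (q.2 + Real.pi / 2) := by
  rw [pur_fun, pu_sep q (hQ q.1) (hid q.2)]

lemma pvvr (q : ℝ × ℝ) : pv (pv rsph) q = 0 := by
  rw [pvr_fun, pv_fst q (hT q.1)]

set_option maxHeartbeats 1000000 in
/-- (i) `lsph` is an isothermal parametrization of a minimal surface in `S³`
with conformal factor `Esph`; (ii) `rsph` solves `Δr + 2E·r = 0`; (iii) the generated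
minimal foliated semi-symmetric hypersurface `r·l + (r_u/E)·l_u + (r_v/E)·l_v + w·n` is the
first type helicoid `(−sinh u·sin v, sinh u·cos v, v + π/2, w)`. -/
theorem stmt_18 :
    (∀ q : ℝ × ℝ,
      ⟪lsph q, lsph q⟫_ℝ = 1 ∧
      ⟪pu lsph q, pu lsph q⟫_ℝ = Esph q ∧
      ⟪pv lsph q, pv lsph q⟫_ℝ = Esph q ∧
      ⟪pu lsph q, pv lsph q⟫_ℝ = 0 ∧
      pu (pu lsph) q + pv (pv lsph) q + (2 * Esph q) • lsph q = 0) ∧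
    (∀ q : ℝ × ℝ, pu (pu rsph) q + pv (pv rsph) q + 2 * Esph q * rsph q = 0) ∧
    ∀ (q : ℝ × ℝ) (w : ℝ),
      rsph q • lsph q + (pu rsph q / Esph q) • pu lsph q
        + (pv rsph q / Esph q) • pv lsph q + w • nsph =
      (WithLp.equiv 2 (Fin 4 → ℝ)).symm
        ![-(Real.sinh q.1 * Real.sin q.2), Real.sinh q.1 * Real.cos q.2,
          q.2 + Real.pi / 2, w] := by
  refine ⟨fun q => ⟨?_, ?_, ?_, ?_, ?_⟩, fun q => ?_, fun q w => ?_⟩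
  · simp only [l_fun, inner_V]
    have hc := (Real.cosh_pos q.1).ne'
    field_simp
    nlinarith [Real.sin_sq_add_cos_sq q.2, Real.cosh_sq q.1]
  · simp only [pul_fun, inner_V, Esph]
    have hc := (Real.cosh_pos q.1).ne'
    field_simp
    nlinarith [Real.sin_sq_add_cos_sq q.2, Real.cosh_sq q.1]
  · simp only [pvl_fun, inner_V, Esph]
    have hc := (Real.cosh_pos q.1).ne'
    field_simp
    nlinarith [Real.sin_sq_add_cos_sq q.2, Real.cosh_sq q.1]
  · simp only [pul_fun, pvl_fun, inner_V]
    ring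
  · rw [puul q, pvvl q, l_fun]
    simp only [Esph, smul_V, add_V]
    rw [← V_zero]
    have hc := (Real.cosh_pos q.1).ne'
    refine V_congr ?_ ?_ ?_ ?_
    · field_simp
      linear_combination (-(Real.cos q.2)) * Real.cosh_sq q.1
    · field_simp
      linear_combination (-(Real.sin q.2)) * Real.cosh_sq q.1
    · field_simp
      ring
    · ring
  · rw [puur q, pvvr q]
    simp only [Esph, rsph, Real.tanh_eq_sinh_div_cosh]
    have hc := (Real.cosh_pos q.1).ne'
    field_simp
    ring
  · have hV : ∀ a b c d : ℝ, (WithLp.equiv 2 (Fin 4 → ℝ)).symm ![a, b, c, d] = V a b c d :=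
      fun _ _ _ _ => rfl
    rw [hV, pur_fun, pvr_fun, pul_fun, pvl_fun, l_fun, nsph_eq]
    beta_reduce
    rw [smul_V, smul_V, smul_V, smul_V, add_V, add_V, add_V]
    simp only [rsph, Esph, Real.tanh_eq_sinh_div_cosh]
    have hc := (Real.cosh_pos q.1).ne'
    refine V_congr ?_ ?_ ?_ ?_
    · field_simp
      ring
    · field_simp
      ring
    · field_simp
      linear_combination (-(q.2 * 2 + Real.pi)) * Real.cosh_sq q.1
    · ring
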